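/- Let C > 0, α > 0, Lx > 0, Ly > 0, d > 0 be real numbers. Then (1/(Lx·Ly)) ∫₀^{Lx} ∫₀^{Ly} log₂( C · e^{−α·min(x, Lx−x)} / (y² + d²) ) dy dx = log₂(C) − (α·Lx/4)·log₂(e) − [ log₂(Ly² + d²) − (2/ln 2)·(1 − (d/Ly)·arctan(Ly/d)) ]. -/

import Mathlib

open Real

lemma log_sq_integral (L d : ℝ) (hd : 0 < d) :
    ∫ y in (0:ℝ)..L, Real.log (y ^ 2 + d ^ 2)
      = L * Real.log (L ^ 2 + d ^ 2) - 2 * L + 2 * d * Real.arctan (L / d) := by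
  have hpos : ∀ y : ℝ, 0 < y ^ 2 + d ^ 2 := fun y => by positivity
  have hderiv : ∀ y ∈ Set.uIcc (0:ℝ) L,
      HasDerivAt (fun y => y * Real.log (y ^ 2 + d ^ 2) - 2 * y + 2 * d * Real.arctan (y / d))
        (Real.log (y ^ 2 + d ^ 2)) y := by
    intro y _
    have h1 : HasDerivAt (fun y : ℝ => y ^ 2 + d ^ 2) (2 * y) y := by
      simpa using (hasDerivAt_pow 2 y).add_const (d ^ 2)
    have hlog : HasDerivAt (fun y : ℝ => Real.log (y ^ 2 + d ^ 2))
        (2 * y / (y ^ 2 + d ^ 2)) y := h1.log (hpos y).ne'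
    have hmul : HasDerivAt (fun y : ℝ => y * Real.log (y ^ 2 + d ^ 2))
        (1 * Real.log (y ^ 2 + d ^ 2) + y * (2 * y / (y ^ 2 + d ^ 2))) y :=
      (hasDerivAt_id y).mul hlog
    have harctan : HasDerivAt (fun y : ℝ => Real.arctan (y / d))
        ((1 / (1 + (y / d) ^ 2)) * (1 / d)) y := by
      have := (Real.hasDerivAt_arctan (y / d)).comp y ((hasDerivAt_id y).div_const d)
      simp only [one_div] at this ⊢
      exact this
    have h := (hmul.sub ((hasDerivAt_id y).const_mul 2)).add
      ((harctan.const_mul (2 * d)))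
    refine h.congr_deriv ?_
    have hd' : d ≠ 0 := hd.ne'
    have h2 : (1 + (y / d) ^ 2) ≠ 0 := by positivity
    field_simp
    ring
  have hcont : Continuous fun y : ℝ => Real.log (y ^ 2 + d ^ 2) := by
    apply Continuous.log (by continuity)
    intro y; exact (hpos y).ne'
  have := intervalIntegral.integral_eq_sub_of_hasDerivAt hderiv
    (hcont.intervalIntegrable 0 L)
  simp at this
  rw [this]

lemma min_integral (Lx : ℝ) (hLx : 0 < Lx) :
    ∫ x in (0:ℝ)..Lx, min x (Lx - x) = Lx ^ 2 / 4 := by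
  have hcont : Continuous fun x : ℝ => min x (Lx - x) :=
    continuous_id.min (continuous_const.sub continuous_id)
  have hsplit : ∫ x in (0:ℝ)..Lx, min x (Lx - x)
      = (∫ x in (0:ℝ)..(Lx/2), min x (Lx - x)) + ∫ x in (Lx/2)..Lx, min x (Lx - x) :=
    (intervalIntegral.integral_add_adjacent_intervals
      (hcont.intervalIntegrable _ _) (hcont.intervalIntegrable _ _)).symm
  have h1 : ∫ x in (0:ℝ)..(Lx/2), min x (Lx - x) = ∫ x in (0:ℝ)..(Lx/2), x := by
    apply intervalIntegral.integral_congr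
    intro x hx
    rw [Set.uIcc_of_le (by linarith)] at hx
    exact min_eq_left (by simp at hx ⊢; linarith [hx.1, hx.2])
  have h2 : ∫ x in (Lx/2)..Lx, min x (Lx - x) = ∫ x in (Lx/2)..Lx, (Lx - x) := by
    apply intervalIntegral.integral_congr
    intro x hx
    rw [Set.uIcc_of_le (by linarith)] at hx
    exact min_eq_right (by simp at hx ⊢; linarith [hx.1, hx.2])
  rw [hsplit, h1, h2, integral_id,
    intervalIntegral.integral_sub intervalIntegrable_const
      intervalIntegral.intervalIntegrable_id, integral_id,
    intervalIntegral.integral_const]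
  simp [smul_eq_mul]
  ring

theorem df_pas_single_waveguide_ergodic_rate
    (C α Lx Ly d : ℝ) (hC : 0 < C) (hα : 0 < α) (hLx : 0 < Lx) (hLy : 0 < Ly)
    (hd : 0 < d) :
    (1 / (Lx * Ly)) *
      ∫ x in (0:ℝ)..Lx, ∫ y in (0:ℝ)..Ly,
        Real.logb 2 (C * Real.exp (-α * min x (Lx - x)) / (y ^ 2 + d ^ 2))
    = Real.logb 2 C - (α * Lx / 4) * Real.logb 2 (Real.exp 1)
      - (Real.logb 2 (Ly ^ 2 + d ^ 2)
          - (2 / Real.log 2) * (1 - (d / Ly) * Real.arctan (Ly / d))) := by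
  have hpos : ∀ y : ℝ, 0 < y ^ 2 + d ^ 2 := fun y => by positivity
  have hlog2 : Real.log 2 ≠ 0 := (Real.log_pos one_lt_two).ne'
  set J : ℝ := Ly * Real.log (Ly ^ 2 + d ^ 2) - 2 * Ly + 2 * d * Real.arctan (Ly / d) with hJ
  have hinner : ∀ x : ℝ,
      (∫ y in (0:ℝ)..Ly, Real.logb 2 (C * Real.exp (-α * min x (Lx - x)) / (y ^ 2 + d ^ 2)))
      = (Ly * (Real.log C + (-α * min x (Lx - x))) - J) / Real.log 2 := by
    intro x
    have hcongr : ∀ y : ℝ,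
        Real.logb 2 (C * Real.exp (-α * min x (Lx - x)) / (y ^ 2 + d ^ 2))
        = ((Real.log C + (-α * min x (Lx - x))) - Real.log (y ^ 2 + d ^ 2)) / Real.log 2 := by
      intro y
      rw [Real.logb, Real.log_div (by positivity) (hpos y).ne',
        Real.log_mul hC.ne' (Real.exp_pos _).ne', Real.log_exp]
    simp only [hcongr]
    rw [intervalIntegral.integral_div]
    rw [intervalIntegral.integral_sub intervalIntegrable_const
      (by
        apply Continuous.intervalIntegrable
        apply Continuous.log (by continuity)
        intro y; exact (hpos y).ne')]
    rw [intervalIntegral.integral_const, log_sq_integral Ly d hd]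
    simp [hJ]
    try ring
  simp only [hinner]
  have houter :
      (∫ x in (0:ℝ)..Lx, (Ly * (Real.log C + (-α * min x (Lx - x))) - J) / Real.log 2)
      = (Lx * (Ly * Real.log C - J) - Ly * α * (Lx ^ 2 / 4)) / Real.log 2 := by
    have hcongr : ∀ x : ℝ,
        (Ly * (Real.log C + (-α * min x (Lx - x))) - J) / Real.log 2
        = (Ly * Real.log C - J) / Real.log 2
          - (Ly * α / Real.log 2) * min x (Lx - x) := by
      intro x; field_simp; ring
    simp only [hcongr]
    have hcont : Continuous fun x : ℝ => min x (Lx - x) :=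
      continuous_id.min (continuous_const.sub continuous_id)
    rw [intervalIntegral.integral_sub intervalIntegrable_const
      ((hcont.intervalIntegrable _ _).const_mul _),
      intervalIntegral.integral_const,
      intervalIntegral.integral_const_mul, min_integral Lx hLx]
    field_simp
    ring_nf
    field_simp
    ring
  rw [houter]
  have hLy2 : Real.logb 2 (Ly ^ 2 + d ^ 2) = Real.log (Ly ^ 2 + d ^ 2) / Real.log 2 := rfl
  simp only [Real.logb, Real.log_exp, hJ]
  field_simp
  ring
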